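/- Let r : Fin n → ℝ be non-increasing (r 1 ≥ ... ≥ r n) and s : Fin n → ℝ be non-increasing and nonnegative. Let σ1, σ2 be permutations of Fin n such that σ1 is more ordered than σ2 with respect to r, i.e., for all i < j (so r i ≥ r j), if σ2(i) < σ2(j) then σ1(i) < σ1(j). Then Σ_x s(x)·r(σ1⁻¹(x)) ≥ Σ_x s(x)·r(σ2⁻¹(x)). -/

import Mathlib

open Finset

/-- The inversion set of a permutation of `Fin n`. -/
def GR.invSet {n : ℕ} (σ : Equiv.Perm (Fin n)) : Finset (Fin n × Fin n) :=
  Finset.univ.filter fun p => p.1 < p.2 ∧ σ p.2 < σ p.1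

lemma GR.swap_adj_lt {n : ℕ} {a b u v : Fin n} (hab : (b : ℕ) = (a : ℕ) + 1)
    (h : Equiv.swap a b u < Equiv.swap a b v) : u < v ∨ (u = b ∧ v = a) := by
  rw [Equiv.swap_apply_def, Equiv.swap_apply_def] at h
  simp only [Fin.lt_def, Fin.ext_iff] at *
  split_ifs at h <;> omega

lemma GR.key (n : ℕ) (r s : Fin n → ℝ)
    (hr : ∀ ⦃i j : Fin n⦄, i ≤ j → r j ≤ r i)
    (hs : ∀ ⦃i j : Fin n⦄, i ≤ j → s j ≤ s i)
    (σ1 : Equiv.Perm (Fin n)) :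
    ∀ N : ℕ, ∀ σ2 : Equiv.Perm (Fin n), (GR.invSet σ2).card = N →
      (∀ ⦃i j : Fin n⦄, i < j → σ2 i < σ2 j → σ1 i < σ1 j) →
      ∑ x : Fin n, s x * r (σ2⁻¹ x) ≤ ∑ x : Fin n, s x * r (σ1⁻¹ x) := by
  intro N
  induction N using Nat.strong_induction_on with
  | _ N ih =>
  intro σ2 hcard hmore
  set D : Finset (Fin n × Fin n) :=
    Finset.univ.filter (fun p => p.1 < p.2 ∧ σ2 p.2 < σ2 p.1 ∧ σ1 p.1 < σ1 p.2) with hDdef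
  rcases D.eq_empty_or_nonempty with hD | hD
  · -- no "improvable" inversion: σ2 ∘ σ1⁻¹ is strictly monotone hence the identity
    have hrev : ∀ ⦃i j : Fin n⦄, i < j → σ2 j < σ2 i → σ1 j < σ1 i := by
      intro i j hij h2
      have hne : σ1 i ≠ σ1 j := fun h => absurd (σ1.injective h) hij.ne
      rcases lt_or_gt_of_ne hne with h | h
      · exfalso
        have hmem : (i, j) ∈ D := by
          rw [hDdef]
          simp only [Finset.mem_filter, Finset.mem_univ, true_and]
          exact ⟨hij, h2, h⟩
        rw [hD] at hmem
        exact absurd hmem (Finset.notMem_empty _)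
      · exact h
    have hmono : StrictMono (fun x => σ2 (σ1⁻¹ x)) := by
      intro a b hab
      have hpa : σ1 (σ1⁻¹ a) = a := σ1.apply_symm_apply a
      have hqb : σ1 (σ1⁻¹ b) = b := σ1.apply_symm_apply b
      have hpq : σ1⁻¹ a ≠ σ1⁻¹ b := by
        intro h
        rw [← hpa, ← hqb, h] at hab
        exact lt_irrefl _ hab
      simp only
      rcases lt_or_gt_of_ne hpq with h | h
      · by_contra hc
        push_neg at hc
        have hne2 : σ2 (σ1⁻¹ b) ≠ σ2 (σ1⁻¹ a) := fun he => hpq (σ2.injective he).symm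
        have := hrev h (lt_of_le_of_ne hc hne2)
        rw [hpa, hqb] at this
        exact absurd hab (not_lt.2 this.le)
      · by_contra hc
        push_neg at hc
        have hne2 : σ2 (σ1⁻¹ b) ≠ σ2 (σ1⁻¹ a) := fun he => hpq (σ2.injective he).symm
        have := hmore h (lt_of_le_of_ne hc hne2)
        rw [hpa, hqb] at this
        exact absurd hab (not_lt.2 this.le)
    have hfeq : (fun x => σ2 (σ1⁻¹ x)) = id := by
      haveI : WellFoundedLT (Fin n) := inferInstance
      have hid : StrictMono (id : Fin n → Fin n) := strictMono_id
      refine (StrictMono.range_inj hmono hid).1 ?_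
      have hsurj : Function.Surjective (fun x => σ2 (σ1⁻¹ x)) :=
        σ2.surjective.comp (σ1⁻¹).surjective
      rw [hsurj.range_eq, Set.range_id]
    refine le_of_eq (Finset.sum_congr rfl fun x _ => ?_)
    have hx : σ2 (σ1⁻¹ x) = x := congrFun hfeq x
    have hxx : σ1⁻¹ x = σ2⁻¹ x := by
      apply σ2.injective
      rw [hx, Equiv.Perm.coe_inv, Equiv.apply_symm_apply]
    rw [hxx]
  · obtain ⟨p0, hp0, hmin⟩ := D.exists_min_image (fun p => (σ2 p.1 : ℕ) - (σ2 p.2 : ℕ)) hD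
    rw [hDdef] at hp0
    simp only [Finset.mem_filter, Finset.mem_univ, true_and] at hp0
    obtain ⟨hij, h2ji, h1ij⟩ := hp0
    set i := p0.1 with hi
    set j := p0.2 with hj
    have hji : (σ2 j : ℕ) < (σ2 i : ℕ) := h2ji
    -- "not in D" from minimality
    have hnotD : ∀ p q : Fin n, p < q → σ2 q < σ2 p →
        (σ2 p : ℕ) - (σ2 q : ℕ) < (σ2 i : ℕ) - (σ2 j : ℕ) → ¬ σ1 p < σ1 q := by
      intro p q h1 h2 h3 h4
      have hmem : (p, q) ∈ D := by
        rw [hDdef]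
        simp only [Finset.mem_filter, Finset.mem_univ, true_and]
        exact ⟨h1, h2, h4⟩
      have := hmin _ hmem
      simp only at this
      omega
    -- values are adjacent
    have hadj : (σ2 i : ℕ) = (σ2 j : ℕ) + 1 := by
      by_contra hnadj
      have hgap : (σ2 j : ℕ) + 1 < (σ2 i : ℕ) := by omega
      set v : Fin n := ⟨(σ2 j : ℕ) + 1, lt_trans hgap (σ2 i).isLt⟩ with hv
      set k := σ2⁻¹ v with hk
      have hsk : σ2 k = v := σ2.apply_symm_apply v
      have hkjN : (σ2 j : ℕ) < (σ2 k : ℕ) := by rw [hsk]; simp [hv]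
      have hkiN : (σ2 k : ℕ) < (σ2 i : ℕ) := by rw [hsk]; exact hgap
      have hkj' : σ2 j < σ2 k := hkjN
      have hki' : σ2 k < σ2 i := hkiN
      have hkN : (σ2 k : ℕ) = (σ2 j : ℕ) + 1 := by rw [hsk]
      have hkni : k ≠ i := fun h => by rw [h] at hkiN; omega
      have hknj : k ≠ j := fun h => by rw [h] at hkjN; omega
      rcases lt_trichotomy k i with hc1 | hc1 | hc1
      · have e1 : σ1 k < σ1 i := hmore hc1 hki'
        have e2 : ¬ σ1 k < σ1 j := hnotD k j (hc1.trans hij) hkj' (by omega)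
        have hne : σ1 j ≠ σ1 k := fun h => hknj (σ1.injective h).symm
        have e3 : σ1 j < σ1 k := lt_of_le_of_ne (not_lt.1 e2) hne
        exact absurd h1ij (not_lt.2 (e3.trans e1).le)
      · exact hkni hc1
      · rcases lt_trichotomy k j with hc2 | hc2 | hc2
        · have e1 : ¬ σ1 i < σ1 k := hnotD i k hc1 hki' (by omega)
          have e2 : ¬ σ1 k < σ1 j := hnotD k j hc2 hkj' (by omega)
          have hne1 : σ1 k ≠ σ1 i := fun h => hkni (σ1.injective h)
          have hne2 : σ1 j ≠ σ1 k := fun h => hknj (σ1.injective h).symm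
          have e3 : σ1 k < σ1 i := lt_of_le_of_ne (not_lt.1 e1) hne1
          have e4 : σ1 j < σ1 k := lt_of_le_of_ne (not_lt.1 e2) hne2
          exact absurd h1ij (not_lt.2 ((e4.trans e3)).le)
        · exact hknj hc2
        · have e1 : σ1 j < σ1 k := hmore hc2 hkj'
          have e2 : ¬ σ1 i < σ1 k := hnotD i k (hij.trans hc2) hki' (by omega)
          have hne1 : σ1 k ≠ σ1 i := fun h => hkni (σ1.injective h)
          have e3 : σ1 k < σ1 i := lt_of_le_of_ne (not_lt.1 e2) hne1
          exact absurd h1ij (not_lt.2 ((e1.trans e3)).le)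
    -- swap the adjacent values a = σ2 j and b = σ2 i
    set a := σ2 j with ha
    set b := σ2 i with hb
    have hab : (b : ℕ) = (a : ℕ) + 1 := hadj
    have hne_ab : a ≠ b := by
      intro h
      rw [h] at hab
      omega
    have hale : a ≤ b := by
      rw [Fin.le_def]
      omega
    set σ2' : Equiv.Perm (Fin n) := σ2.trans (Equiv.swap a b) with hσ2'
    have hσ2'app : ∀ x, σ2' x = Equiv.swap a b (σ2 x) := fun x => rfl
    -- inverse computations
    have hσ2'i : σ2' i = a := by rw [hσ2'app, ← hb, Equiv.swap_apply_right]
    have hσ2'j : σ2' j = b := by rw [hσ2'app, ← ha, Equiv.swap_apply_left]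
    have hinva : σ2'⁻¹ a = i := by rw [← hσ2'i, Equiv.Perm.coe_inv, Equiv.symm_apply_apply]
    have hinvb : σ2'⁻¹ b = j := by rw [← hσ2'j, Equiv.Perm.coe_inv, Equiv.symm_apply_apply]
    have hinva2 : σ2⁻¹ a = j := by rw [ha, Equiv.Perm.coe_inv, Equiv.symm_apply_apply]
    have hinvb2 : σ2⁻¹ b = i := by rw [hb, Equiv.Perm.coe_inv, Equiv.symm_apply_apply]
    have hfix : ∀ x : Fin n, x ≠ a → x ≠ b → σ2'⁻¹ x = σ2⁻¹ x := by
      intro x hx1 hx2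
      apply σ2'.injective
      rw [Equiv.Perm.coe_inv, Equiv.apply_symm_apply, hσ2'app, Equiv.Perm.coe_inv, Equiv.apply_symm_apply,
        Equiv.swap_apply_of_ne_of_ne hx1 hx2]
    -- σ2' still satisfies the "more ordered" hypothesis
    have hmore' : ∀ ⦃p q : Fin n⦄, p < q → σ2' p < σ2' q → σ1 p < σ1 q := by
      intro p q hpq h
      rw [hσ2'app, hσ2'app] at h
      rcases GR.swap_adj_lt hab h with h' | ⟨h1', h2'⟩
      · exact hmore hpq h'
      · have hpi : p = i := σ2.injective (h1'.trans hb)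
        have hqj : q = j := σ2.injective (h2'.trans ha)
        rw [hpi, hqj]
        exact h1ij
    -- inversions strictly decrease
    have hsub : GR.invSet σ2' ⊆ GR.invSet σ2 := by
      intro p hp
      simp only [GR.invSet, Finset.mem_filter, Finset.mem_univ, true_and] at hp ⊢
      obtain ⟨h1, h2⟩ := hp
      refine ⟨h1, ?_⟩
      rw [hσ2'app, hσ2'app] at h2
      rcases GR.swap_adj_lt hab h2 with h' | ⟨h1', h2'⟩
      · exact h'
      · exfalso
        have hp2 : p.2 = i := σ2.injective (h1'.trans hb)
        have hp1 : p.1 = j := σ2.injective (h2'.trans ha)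
        rw [hp1, hp2] at h1
        exact absurd hij (not_lt.2 h1.le)
    have hmem1 : (i, j) ∈ GR.invSet σ2 := by
      simp only [GR.invSet, Finset.mem_filter, Finset.mem_univ, true_and]
      exact ⟨hij, h2ji⟩
    have hmem2 : (i, j) ∉ GR.invSet σ2' := by
      simp only [GR.invSet, Finset.mem_filter, Finset.mem_univ, true_and, not_and]
      intro _
      rw [hσ2'i, hσ2'j]
      rw [Fin.lt_def]
      omega
    have hss : GR.invSet σ2' ⊂ GR.invSet σ2 :=
      (Finset.ssubset_iff_of_subset hsub).2 ⟨(i, j), hmem1, hmem2⟩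
    have hlt : (GR.invSet σ2').card < N := hcard ▸ Finset.card_lt_card hss
    -- the swap weakly increases the sum
    have hkey : ∑ x : Fin n, s x * r (σ2⁻¹ x) ≤ ∑ x : Fin n, s x * r (σ2'⁻¹ x) := by
      have hdiff : ∑ x : Fin n, (s x * r (σ2'⁻¹ x) - s x * r (σ2⁻¹ x))
          = (s a - s b) * (r i - r j) := by
        rw [← Finset.sum_subset (Finset.subset_univ ({a, b} : Finset (Fin n)))
          (fun x _ hx => ?_)]
        · rw [Finset.sum_pair hne_ab, hinva, hinvb, hinva2, hinvb2]
          ring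
        · simp only [Finset.mem_insert, Finset.mem_singleton, not_or] at hx
          rw [hfix x hx.1 hx.2]
          ring
      have hpos : 0 ≤ (s a - s b) * (r i - r j) :=
        mul_nonneg (sub_nonneg.2 (hs hale)) (sub_nonneg.2 (hr hij.le))
      rw [Finset.sum_sub_distrib] at hdiff
      linarith
    exact hkey.trans (ih _ hlt σ2' rfl hmore')

/-- Generalized rearrangement inequality — a more ordered permutation
yields a weakly larger inner product with decreasing nonnegative weights. -/
theorem generalized_rearrangement
    (n : ℕ) (r s : Fin n → ℝ)
    (hr : ∀ ⦃i j : Fin n⦄, i ≤ j → r j ≤ r i)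
    (hs : ∀ ⦃i j : Fin n⦄, i ≤ j → s j ≤ s i)
    (hs0 : ∀ i, 0 ≤ s i)
    (σ1 σ2 : Equiv.Perm (Fin n))
    (hmore : ∀ ⦃i j : Fin n⦄, i < j → σ2 i < σ2 j → σ1 i < σ1 j) :
    ∑ x : Fin n, s x * r (σ2⁻¹ x) ≤ ∑ x : Fin n, s x * r (σ1⁻¹ x) := by
  exact GR.key n r s hr hs σ1 _ σ2 rfl hmore
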